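/- Suppose R_min ≥ 30√d and a ≤ R_min/2 − √d·max{4√(2[log(R_min/4)]₊), 8√3}. Then for any μ with μ_i ∈ B(μ_i*, a) for all i and any i ≠ j, E[w_i(X;μ) w_j(X;μ) ‖X − μ_i‖₂ ‖X − μ_j‖₂] ≤ ((2−κ)/κ)·((3/2)R_max + d)² · exp(−(R_min/2 − a)·√d/8), where X is drawn from the true mixture and κ = min_k π_k. -/

import Mathlib

open MeasureTheory

/-- Gaussian-mixture posterior responsibility of component `i` at point `x`,
under candidate centers `μ` and mixing weights `pr`. -/
noncomputable def respW (d M : ℕ) (pr : Fin M → ℝ)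
    (μ : Fin M → EuclideanSpace ℝ (Fin d)) (i : Fin M)
    (x : EuclideanSpace ℝ (Fin d)) : ℝ :=
  pr i * Real.exp (-‖x - μ i‖ ^ 2 / 2) / ∑ k, pr k * Real.exp (-‖x - μ k‖ ^ 2 / 2)

/-- Standard Gaussian density on `ℝ^d`. -/
noncomputable def stdGaussDensity (d : ℕ) (x : EuclideanSpace ℝ (Fin d)) : ℝ :=
  (2 * Real.pi) ^ (-(d : ℝ) / 2) * Real.exp (-‖x‖ ^ 2 / 2)

/-- Density of the Gaussian mixture `∑ i, pr i · N(μ i, I_d)` on `ℝ^d`. -/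
noncomputable def mixDensity (d M : ℕ) (pr : Fin M → ℝ)
    (μ : Fin M → EuclideanSpace ℝ (Fin d)) (x : EuclideanSpace ℝ (Fin d)) : ℝ :=
  ∑ i, pr i * stdGaussDensity d (x - μ i)

open Real


lemma g1d0 : ∫ x : ℝ, Real.exp (-x ^ 2 / 2) = Real.sqrt (2 * π) := by
  have h := integral_gaussian (1/2 : ℝ)
  simp only [neg_mul] at h
  rw [show (π / (1/2 : ℝ)) = 2 * π by ring] at h
  rw [← h]
  congr 1 with x
  ring_nf

lemma i1d0 : Integrable (fun x : ℝ => Real.exp (-x ^ 2 / 2)) := by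
  have h := integrable_exp_neg_mul_sq (b := (1/2 : ℝ)) (by norm_num)
  convert h using 2 with x
  ring_nf

lemma i1d2 : Integrable (fun x : ℝ => x ^ 2 * Real.exp (-x ^ 2 / 2)) := by
  have h := integrable_rpow_mul_exp_neg_mul_sq (b := (1/2 : ℝ)) (by norm_num) (s := 2) (by norm_num)
  convert h using 2 with x
  rw [show ((2:ℝ) = ((2:ℕ):ℝ)) by norm_num, Real.rpow_natCast]
  ring_nf

lemma g1d2 : ∫ x : ℝ, x ^ 2 * Real.exp (-x ^ 2 / 2) = Real.sqrt (2 * π) := by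
  have habs : ∀ x : ℝ, |x| ^ 2 * Real.exp (-|x| ^ 2 / 2) = x ^ 2 * Real.exp (-x ^ 2 / 2) := by
    intro x; rw [sq_abs]
  rw [show (fun x : ℝ => x ^ 2 * Real.exp (-x ^ 2 / 2))
      = (fun x : ℝ => |x| ^ 2 * Real.exp (-|x| ^ 2 / 2)) from funext fun x => (habs x).symm]
  rw [integral_comp_abs (f := fun x : ℝ => x ^ 2 * Real.exp (-x ^ 2 / 2))]
  have h := integral_rpow_mul_exp_neg_mul_rpow (p := 2) (q := 2) (b := (1/2 : ℝ))
    (by norm_num) (by norm_num) (by norm_num)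
  have he : ∀ x ∈ Set.Ioi (0:ℝ), x ^ (2:ℝ) * Real.exp (-(1/2 : ℝ) * x ^ (2:ℝ))
      = x ^ 2 * Real.exp (-x ^ 2 / 2) := by
    intro x _
    rw [show ((2:ℝ) = ((2:ℕ):ℝ)) by norm_num, Real.rpow_natCast]
    ring_nf
  rw [setIntegral_congr_fun measurableSet_Ioi he] at h
  rw [h]
  rw [show ((2:ℝ)+1)/2 = (3:ℝ)/2 by norm_num]
  rw [show ((3:ℝ)/2) = 1/2 + 1 by norm_num, Real.Gamma_add_one (by norm_num), Real.Gamma_one_half_eq]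
  rw [show (-((2:ℝ)+1)/2) = (-(3/2) : ℝ) by norm_num]
  rw [show ((1/2 : ℝ) ^ (-(3/2) : ℝ)) = 2 ^ ((3/2) : ℝ) by
    rw [show (1/2 : ℝ) = 2⁻¹ by norm_num, ← Real.rpow_neg_one,
      ← Real.rpow_mul (by norm_num)]
    norm_num]
  rw [show ((3/2 : ℝ)) = 1 + 1/2 by norm_num, Real.rpow_add (by norm_num), Real.rpow_one]
  rw [show ((2:ℝ) ^ ((1/2):ℝ)) = Real.sqrt 2 by rw [Real.sqrt_eq_rpow]]
  rw [Real.sqrt_mul (by norm_num)]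
  ring







lemma gd0 (d : ℕ) {b : ℝ} (hb : 0 < b) :
    ∫ v : EuclideanSpace ℝ (Fin d), Real.exp (-b * ‖v‖ ^ 2) = (π / b) ^ ((d:ℝ)/2) := by
  rw [GaussianFourier.integral_rexp_neg_mul_sq_norm hb]
  norm_num [finrank_euclideanSpace_fin]

lemma id0 (d : ℕ) {b : ℝ} (hb : 0 < b) :
    Integrable (fun v : EuclideanSpace ℝ (Fin d) => Real.exp (-b * ‖v‖ ^ 2)) := by
  have h := (GaussianFourier.integrable_cexp_neg_mul_sq_norm_add (V := EuclideanSpace ℝ (Fin d))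
    (b := (b:ℂ)) (by simpa using hb) 0 0).norm
  simpa [Complex.norm_exp, ← Complex.ofReal_pow] using h

lemma pi_pointwise (d : ℕ) (i : Fin d) (y : Fin d → ℝ) :
    (∏ j, ((if j = i then (y j) ^ 2 else 1) * Real.exp (-(y j) ^ 2 / 2)))
      = (y i) ^ 2 * Real.exp (-(∑ j, (y j) ^ 2) / 2) := by
  rw [Finset.prod_mul_distrib, Finset.prod_ite_eq' Finset.univ i (fun j => (y j) ^ 2)]
  simp only [Finset.mem_univ, if_true]
  congr 1
  rw [← Real.exp_sum]
  congr 1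
  rw [← Finset.sum_div, ← Finset.sum_neg_distrib]

lemma ipi (d : ℕ) (i : Fin d) :
    Integrable (fun y : Fin d → ℝ =>
      ∏ j, ((if j = i then (y j) ^ 2 else 1) * Real.exp (-(y j) ^ 2 / 2))) := by
  apply Integrable.fintype_prod (f := fun j (t : ℝ) => (if j = i then t ^ 2 else 1) * Real.exp (-t ^ 2 / 2))
  intro j
  by_cases h : j = i <;> simp [h, i1d0, i1d2]

lemma gd2 (d : ℕ) :
    ∫ v : EuclideanSpace ℝ (Fin d), ‖v‖ ^ 2 * Real.exp (-‖v‖ ^ 2 / 2)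
      = d * Real.sqrt (2 * π) ^ d := by
  have mp := PiLp.volume_preserving_toLp (Fin d)
  rw [← mp.integral_comp (MeasurableEquiv.toLp 2 (Fin d → ℝ)).measurableEmbedding
    (fun v : EuclideanSpace ℝ (Fin d) => ‖v‖ ^ 2 * Real.exp (-‖v‖ ^ 2 / 2))]
  have hnorm : ∀ y : Fin d → ℝ,
      ‖(WithLp.toLp 2 y : EuclideanSpace ℝ (Fin d))‖ ^ 2 = ∑ i, (y i) ^ 2 := by
    intro y
    simp only [EuclideanSpace.norm_eq, PiLp.toLp_apply, Real.norm_eq_abs, sq_abs]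
    rw [Real.sq_sqrt (Finset.sum_nonneg fun i _ => sq_nonneg _)]
  have key : ∀ y : Fin d → ℝ,
      (fun v : EuclideanSpace ℝ (Fin d) => ‖v‖ ^ 2 * Real.exp (-‖v‖ ^ 2 / 2))
        (WithLp.toLp 2 y : EuclideanSpace ℝ (Fin d))
      = ∑ i, ∏ j, ((if j = i then (y j) ^ 2 else 1) * Real.exp (-(y j) ^ 2 / 2)) := by
    intro y
    simp only [hnorm y, pi_pointwise d _ y]
    rw [← Finset.sum_mul]
  rw [show (fun x : Fin d → ℝ => ‖(WithLp.toLp 2 x : EuclideanSpace ℝ (Fin d))‖ ^ 2 *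
        Real.exp (-‖(WithLp.toLp 2 x : EuclideanSpace ℝ (Fin d))‖ ^ 2 / 2))
      = fun y : Fin d → ℝ => ∑ i, ∏ j, ((if j = i then (y j) ^ 2 else 1) * Real.exp (-(y j) ^ 2 / 2))
      from funext fun y => key y]
  rw [integral_finset_sum _ (fun i _ => ipi d i)]
  have : ∀ i : Fin d, (∫ y : Fin d → ℝ, ∏ j, ((if j = i then (y j) ^ 2 else 1) * Real.exp (-(y j) ^ 2 / 2)))
      = Real.sqrt (2 * π) ^ d := by
    intro i
    rw [integral_fintype_prod_volume_eq_prod (ι := Fin d)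
      (f := fun j (t : ℝ) => (if j = i then t ^ 2 else 1) * Real.exp (-t ^ 2 / 2))]
    rw [Finset.prod_congr rfl (g := fun _ => Real.sqrt (2 * π)) (fun j _ => by
      by_cases h : j = i <;> simp [h, g1d0, g1d2])]
    simp
  rw [Finset.sum_congr rfl (fun (i : Fin d) _ => this i), Finset.sum_const]
  simp [mul_comm]

lemma id2 (d : ℕ) :
    Integrable (fun v : EuclideanSpace ℝ (Fin d) => ‖v‖ ^ 2 * Real.exp (-‖v‖ ^ 2 / 2)) := by
  have mp := PiLp.volume_preserving_toLp (Fin d)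
  rw [← mp.integrable_comp_emb (MeasurableEquiv.toLp 2 (Fin d → ℝ)).measurableEmbedding]
  have hnorm : ∀ y : Fin d → ℝ,
      ‖(WithLp.toLp 2 y : EuclideanSpace ℝ (Fin d))‖ ^ 2 = ∑ i, (y i) ^ 2 := by
    intro y
    simp only [EuclideanSpace.norm_eq, PiLp.toLp_apply, Real.norm_eq_abs, sq_abs]
    rw [Real.sq_sqrt (Finset.sum_nonneg fun i _ => sq_nonneg _)]
  have key : ((fun v : EuclideanSpace ℝ (Fin d) => ‖v‖ ^ 2 * Real.exp (-‖v‖ ^ 2 / 2)) ∘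
      (WithLp.toLp 2 : (Fin d → ℝ) → EuclideanSpace ℝ (Fin d)))
      = fun y : Fin d → ℝ => ∑ i, ∏ j, ((if j = i then (y j) ^ 2 else 1) * Real.exp (-(y j) ^ 2 / 2)) := by
    funext y
    simp only [Function.comp_apply, hnorm y, pi_pointwise d _ y]
    rw [← Finset.sum_mul]
  rw [key]
  exact integrable_finset_sum _ (fun i _ => ipi d i)

-- derived d-dim facts
lemma I0half (d : ℕ) : Integrable (fun v : EuclideanSpace ℝ (Fin d) => Real.exp (-‖v‖ ^ 2 / 2)) := by
  have h := id0 d (show (0:ℝ) < 1/2 by norm_num)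
  rw [show (fun v : EuclideanSpace ℝ (Fin d) => Real.exp (-‖v‖ ^ 2 / 2))
    = fun v : EuclideanSpace ℝ (Fin d) => Real.exp (-(1/2 : ℝ) * ‖v‖ ^ 2) from
    funext fun v => by norm_num; ring_nf]
  exact h

lemma I4 (d : ℕ) : Integrable (fun v : EuclideanSpace ℝ (Fin d) => Real.exp (-‖v‖ ^ 2 / 4)) := by
  have h := id0 d (show (0:ℝ) < 1/4 by norm_num)
  rw [show (fun v : EuclideanSpace ℝ (Fin d) => Real.exp (-‖v‖ ^ 2 / 4))
    = fun v : EuclideanSpace ℝ (Fin d) => Real.exp (-(1/4 : ℝ) * ‖v‖ ^ 2) from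
    funext fun v => by norm_num; ring_nf]
  exact h

lemma G0 (d : ℕ) : ∫ v : EuclideanSpace ℝ (Fin d), Real.exp (-‖v‖ ^ 2 / 2)
    = (2 * π) ^ ((d:ℝ)/2) := by
  have h := gd0 d (show (0:ℝ) < 1/2 by norm_num)
  rw [show (π / (1/2 : ℝ)) = 2 * π by ring] at h
  rw [← h]
  congr 1 with v
  congr 1
  ring

lemma G4 (d : ℕ) : ∫ v : EuclideanSpace ℝ (Fin d), Real.exp (-‖v‖ ^ 2 / 4)
    = (2:ℝ) ^ ((d:ℝ)/2) * (2 * π) ^ ((d:ℝ)/2) := by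
  have h := gd0 d (show (0:ℝ) < 1/4 by norm_num)
  rw [show (π / (1/4 : ℝ)) = 4 * π by ring] at h
  have h4 : ((4 : ℝ) * π) ^ ((d:ℝ)/2) = (2:ℝ) ^ ((d:ℝ)/2) * (2 * π) ^ ((d:ℝ)/2) := by
    rw [← Real.mul_rpow (by norm_num) (by positivity)]
    norm_num; ring_nf
  rw [← h4, ← h]
  congr 1 with v
  congr 1
  ring

lemma G2 (d : ℕ) : ∫ v : EuclideanSpace ℝ (Fin d), ‖v‖ ^ 2 * Real.exp (-‖v‖ ^ 2 / 2)
    = d * (2 * π) ^ ((d:ℝ)/2) := by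
  rw [gd2 d]
  congr 1
  rw [Real.sqrt_eq_rpow, ← Real.rpow_natCast ((2*π) ^ ((1:ℝ)/2)) d,
    ← Real.rpow_mul (by positivity)]
  congr 1
  ring

lemma I1 (d : ℕ) : Integrable (fun v : EuclideanSpace ℝ (Fin d) => ‖v‖ * Real.exp (-‖v‖ ^ 2 / 2)) := by
  have hmaj : Integrable (fun v : EuclideanSpace ℝ (Fin d) =>
      (1/2 : ℝ) * (Real.exp (-‖v‖ ^ 2 / 2) + ‖v‖ ^ 2 * Real.exp (-‖v‖ ^ 2 / 2))) :=
    ((I0half d).add (id2 d)).const_mul _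
  refine hmaj.mono' ?_ ?_
  · exact (continuous_norm.mul (Real.continuous_exp.comp
      (((continuous_norm.pow 2).neg).div_const 2))).aestronglyMeasurable
  · refine Filter.Eventually.of_forall fun v => ?_
    have h1 : (0:ℝ) ≤ ‖v‖ * Real.exp (-‖v‖ ^ 2 / 2) := by positivity
    rw [Real.norm_eq_abs, abs_of_nonneg h1]
    nlinarith [sq_nonneg (1 - ‖v‖), Real.exp_pos (-‖v‖ ^ 2 / 2), norm_nonneg v]

lemma G1 (d : ℕ) : ∫ v : EuclideanSpace ℝ (Fin d), ‖v‖ * Real.exp (-‖v‖ ^ 2 / 2)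
    ≤ (1/2 : ℝ) * (1 + d) * (2 * π) ^ ((d:ℝ)/2) := by
  have hle : ∀ v : EuclideanSpace ℝ (Fin d), ‖v‖ * Real.exp (-‖v‖ ^ 2 / 2)
      ≤ (1/2 : ℝ) * (Real.exp (-‖v‖ ^ 2 / 2) + ‖v‖ ^ 2 * Real.exp (-‖v‖ ^ 2 / 2)) := by
    intro v
    nlinarith [sq_nonneg (1 - ‖v‖), Real.exp_pos (-‖v‖ ^ 2 / 2), norm_nonneg v]
  calc ∫ v : EuclideanSpace ℝ (Fin d), ‖v‖ * Real.exp (-‖v‖ ^ 2 / 2)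
      ≤ ∫ v : EuclideanSpace ℝ (Fin d),
        (1/2 : ℝ) * (Real.exp (-‖v‖ ^ 2 / 2) + ‖v‖ ^ 2 * Real.exp (-‖v‖ ^ 2 / 2)) :=
        integral_mono (I1 d) (((I0half d).add (id2 d)).const_mul _) hle
    _ = (1/2 : ℝ) * ((∫ v : EuclideanSpace ℝ (Fin d), Real.exp (-‖v‖ ^ 2 / 2))
        + ∫ v : EuclideanSpace ℝ (Fin d), ‖v‖ ^ 2 * Real.exp (-‖v‖ ^ 2 / 2)) := by
        rw [integral_const_mul, integral_add (I0half d) (id2 d)]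
    _ = (1/2 : ℝ) * (1 + d) * (2 * π) ^ ((d:ℝ)/2) := by
        rw [G0 d, G2 d]; ring

lemma Iuc (d : ℕ) (c : ℝ) : Integrable (fun v : EuclideanSpace ℝ (Fin d) =>
    (‖v‖ + c) ^ 2 * Real.exp (-‖v‖ ^ 2 / 2)) := by
  have h : (fun v : EuclideanSpace ℝ (Fin d) => (‖v‖ + c) ^ 2 * Real.exp (-‖v‖ ^ 2 / 2))
      = fun v : EuclideanSpace ℝ (Fin d) => ‖v‖ ^ 2 * Real.exp (-‖v‖ ^ 2 / 2)
        + ((2*c) * (‖v‖ * Real.exp (-‖v‖ ^ 2 / 2)) + c^2 * Real.exp (-‖v‖ ^ 2 / 2)) :=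
    funext fun v => by ring
  rw [h]
  exact (id2 d).add (((I1 d).const_mul _).add ((I0half d).const_mul _))

lemma Guc (d : ℕ) (c : ℝ) (hc : 0 ≤ c) (hd : 1 ≤ d) :
    ∫ v : EuclideanSpace ℝ (Fin d), (‖v‖ + c) ^ 2 * Real.exp (-‖v‖ ^ 2 / 2)
      ≤ (c + d) ^ 2 * (2 * π) ^ ((d:ℝ)/2) := by
  have hfun : (fun v : EuclideanSpace ℝ (Fin d) => (‖v‖ + c) ^ 2 * Real.exp (-‖v‖ ^ 2 / 2))
      = fun v : EuclideanSpace ℝ (Fin d) => ‖v‖ ^ 2 * Real.exp (-‖v‖ ^ 2 / 2)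
        + ((2*c) * (‖v‖ * Real.exp (-‖v‖ ^ 2 / 2)) + c^2 * Real.exp (-‖v‖ ^ 2 / 2)) :=
    funext fun v => by ring
  have hsplit : ∫ v : EuclideanSpace ℝ (Fin d), (‖v‖ + c) ^ 2 * Real.exp (-‖v‖ ^ 2 / 2)
      = (∫ v : EuclideanSpace ℝ (Fin d), ‖v‖ ^ 2 * Real.exp (-‖v‖ ^ 2 / 2))
        + ((2*c) * (∫ v : EuclideanSpace ℝ (Fin d), ‖v‖ * Real.exp (-‖v‖ ^ 2 / 2))
        + c^2 * ∫ v : EuclideanSpace ℝ (Fin d), Real.exp (-‖v‖ ^ 2 / 2)) := by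
    have hadd : Integrable (fun v : EuclideanSpace ℝ (Fin d) =>
        2 * c * (‖v‖ * Real.exp (-‖v‖ ^ 2 / 2)) + c ^ 2 * Real.exp (-‖v‖ ^ 2 / 2)) :=
      ((I1 d).const_mul _).add ((I0half d).const_mul _)
    rw [hfun, integral_add (id2 d) hadd,
      integral_add ((I1 d).const_mul _) ((I0half d).const_mul _), integral_const_mul,
      integral_const_mul]
  rw [hsplit, G2 d, G0 d]
  have h1 := G1 d
  have hd1 : (1:ℝ) ≤ (d:ℝ) := by exact_mod_cast hd
  have hP : (0:ℝ) ≤ (2 * π) ^ ((d:ℝ)/2) := by positivity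
  nlinarith [mul_le_mul_of_nonneg_left h1 (by linarith : (0:ℝ) ≤ 2*c),
    mul_nonneg (mul_nonneg (sub_nonneg.mpr hd1) hc) hP,
    mul_nonneg (mul_nonneg (sub_nonneg.mpr hd1) (by linarith : (0:ℝ) ≤ (d:ℝ))) hP]


lemma numineq (s D l2 l3 : ℝ) (hs1 : 1 ≤ s) (hD13 : 13*s ≤ D)
    (hl2 : l2 ≤ 0.7) (hl3 : l3 ≤ 1.4) :
    l3 + l2 * (s^2/2) + -(D - s/8)^2/8 ≤ -D * s / 8 := by
  nlinarith [mul_nonneg (sub_nonneg.mpr hD13) (by linarith : (0:ℝ) ≤ D),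
    mul_nonneg (sub_nonneg.mpr hD13) (by linarith : (0:ℝ) ≤ s),
    mul_nonneg (sub_nonneg.mpr hs1) (by linarith : (0:ℝ) ≤ s), sq_nonneg s, sq_nonneg (s-1)]


section aux
variable {d M : ℕ} {pr : Fin M → ℝ} {μ : Fin M → EuclideanSpace ℝ (Fin d)}

lemma S_pos (hpr : ∀ i, 0 < pr i) (hNE : Nonempty (Fin M))
    (x : EuclideanSpace ℝ (Fin d)) :
    0 < ∑ k, pr k * Real.exp (-‖x - μ k‖ ^ 2 / 2) :=
  Finset.sum_pos (fun k _ => mul_pos (hpr k) (Real.exp_pos _)) Finset.univ_nonempty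

lemma respW_nonneg (hpr : ∀ i, 0 < pr i) (hNE : Nonempty (Fin M)) (l : Fin M)
    (x : EuclideanSpace ℝ (Fin d)) : 0 ≤ respW d M pr μ l x :=
  div_nonneg (mul_nonneg (hpr l).le (Real.exp_pos _).le) (S_pos hpr hNE x).le

lemma respW_le_one (hpr : ∀ i, 0 < pr i) (hNE : Nonempty (Fin M)) (l : Fin M)
    (x : EuclideanSpace ℝ (Fin d)) : respW d M pr μ l x ≤ 1 := by
  unfold respW
  exact div_le_one_of_le₀ (Finset.single_le_sum
    (f := fun k => pr k * Real.exp (-‖x - μ k‖ ^ 2 / 2))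
    (fun k _ => mul_nonneg (hpr k).le (Real.exp_pos _).le) (Finset.mem_univ l))
    (S_pos hpr hNE x).le

end aux

set_option maxHeartbeats 1000000 in
lemma perk {d M : ℕ} (pr : Fin M → ℝ) (hpr : ∀ i, 0 < pr i) (hsum : ∑ i, pr i = 1)
    (κ : ℝ) (hκ : 0 < κ) (hκmin : ∀ i, κ ≤ pr i)
    (μ μstar : Fin M → EuclideanSpace ℝ (Fin d)) (a Rmin Rmax D T s c K1 K2 : ℝ)
    (hμ : ∀ i, ‖μ i - μstar i‖ ≤ a)
    (hRmin : ∀ i j, i ≠ j → Rmin ≤ ‖μstar i - μstar j‖)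
    (hRmax : ∀ i j, i ≠ j → ‖μstar i - μstar j‖ ≤ Rmax)
    (hD_def : D = Rmin/2 - a) (hT_def : T = D - s/8) (hc_def : c = 3 / 2 * Rmax)
    (hK1_def : K1 = 1/κ * Real.exp (-D * s / 8)) (hK2_def : K2 = 3 * c^2 * Real.exp (-T^2/8))
    (ha0 : 0 ≤ a) (hs0 : 0 ≤ s) (hs1 : 1 ≤ s) (hRmin30 : 30 ≤ Rmin) (hRmM : Rmin ≤ Rmax)
    (hD0 : 0 ≤ D) (hDR : D ≤ Rmin) (hT0 : 0 ≤ T) (hc45 : (45:ℝ) ≤ c)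
    (hK1_0 : 0 ≤ K1) (hK2_0 : 0 ≤ K2)
    (i j k : Fin M) (hij : i ≠ j) (x : EuclideanSpace ℝ (Fin d)) :
      respW d M pr μ i x * respW d M pr μ j x * ‖x - μ i‖ * ‖x - μ j‖ *
          Real.exp (-‖x - μstar k‖ ^ 2 / 2)
        ≤ K1 * ((‖x - μstar k‖ + c) ^ 2 * Real.exp (-‖x - μstar k‖ ^ 2 / 2))
          + K2 * Real.exp (-‖x - μstar k‖ ^ 2 / 4) := by
  have hNE : Nonempty (Fin M) := ⟨i⟩
  have hpr1 : ∀ l, pr l ≤ 1 := fun l => by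
    rw [← hsum]
    exact Finset.single_le_sum (fun l _ => (hpr l).le) (Finset.mem_univ l)
  have hS_pos := S_pos (μ := μ) hpr hNE
  have hw0 := respW_nonneg (μ := μ) hpr hNE
  have hw1 := respW_le_one (μ := μ) hpr hNE
  set u : ℝ := ‖x - μstar k‖ with hu_def
  have hu0 : 0 ≤ u := norm_nonneg _
  have hn : ∀ l : Fin M, ‖x - μ l‖ ≤ u + c := by
    intro l
    have h1 : x - μ l = (x - μstar k) + ((μstar k - μstar l) + (μstar l - μ l)) := by abel
    have h2 : ‖μstar k - μstar l‖ ≤ Rmax := by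
      rcases eq_or_ne k l with rfl | h
      · simp only [sub_self, norm_zero]; linarith
      · exact hRmax k l h
    have h3 : ‖μstar l - μ l‖ ≤ a := by rw [norm_sub_rev]; exact hμ l
    calc ‖x - μ l‖ ≤ ‖x - μstar k‖ + (‖μstar k - μstar l‖ + ‖μstar l - μ l‖) := by
              rw [h1]
              exact le_trans (norm_add_le _ _) (add_le_add_right (norm_add_le _ _) _)
          _ ≤ u + c := by rw [hc_def]; rw [← hu_def]; linarith
  have hprod_n : ‖x - μ i‖ * ‖x - μ j‖ ≤ (u + c)^2 := by
    calc ‖x - μ i‖ * ‖x - μ j‖ ≤ (u + c) * (u + c) :=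
        mul_le_mul (hn i) (hn j) (norm_nonneg _) (by linarith)
      _ = (u + c)^2 := (sq (u + c)).symm
  rcases le_or_gt u T with hcase | hcase
  · -- near case
    have hRau : 0 ≤ Rmin - a - u := by
      rw [hT_def, hD_def] at hcase
      linarith
    set m : Fin M := if i = k then j else i with hm_def
    have hmk : m ≠ k := by
      rcases eq_or_ne i k with h | h
      · rw [hm_def, if_pos h]
        exact fun hjk => hij (h.trans hjk.symm)
      · rw [hm_def, if_neg h]
        exact h
    have hwm : respW d M pr μ i x * respW d M pr μ j x ≤ respW d M pr μ m x := by
      rcases eq_or_ne i k with h | h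
      · rw [hm_def, if_pos h]
        calc respW d M pr μ i x * respW d M pr μ j x ≤ 1 * respW d M pr μ j x :=
            mul_le_mul_of_nonneg_right (hw1 i x) (hw0 j x)
          _ = respW d M pr μ j x := one_mul _
      · rw [hm_def, if_neg h]
        calc respW d M pr μ i x * respW d M pr μ j x ≤ respW d M pr μ i x * 1 :=
            mul_le_mul_of_nonneg_left (hw1 j x) (hw0 i x)
          _ = respW d M pr μ i x := mul_one _
    have hkey : respW d M pr μ m x ≤ K1 := by
      have hxk : ‖x - μ k‖ ≤ u + a := by
        have h1 : x - μ k = (x - μstar k) + (μstar k - μ k) := by abel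
        have h2 : ‖μstar k - μ k‖ ≤ a := by rw [norm_sub_rev]; exact hμ k
        calc ‖x - μ k‖ ≤ ‖x - μstar k‖ + ‖μstar k - μ k‖ := by
                rw [h1]; exact norm_add_le _ _
              _ ≤ u + a := by rw [← hu_def]; linarith
      have hxm : Rmin - a - u ≤ ‖x - μ m‖ := by
        have h1 : Rmin ≤ ‖μstar m - μstar k‖ := hRmin m k hmk
        have h2 : μstar m - μstar k = (μstar m - μ m) + ((μ m - x) + (x - μstar k)) := by abel
        have h3 : ‖μstar m - μstar k‖ ≤ ‖μstar m - μ m‖ + (‖μ m - x‖ + ‖x - μstar k‖) := by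
          rw [h2]
          exact le_trans (norm_add_le _ _) (add_le_add_right (norm_add_le _ _) _)
        have h4 : ‖μstar m - μ m‖ ≤ a := by rw [norm_sub_rev]; exact hμ m
        have h5 : ‖μ m - x‖ = ‖x - μ m‖ := norm_sub_rev _ _
        rw [← hu_def] at h3
        linarith [h3, h4, h5.symm.le]
      have hSk : κ * Real.exp (-(u + a)^2 / 2)
          ≤ ∑ l, pr l * Real.exp (-‖x - μ l‖ ^ 2 / 2) := by
        have h1 : Real.exp (-(u+a)^2/2) ≤ Real.exp (-‖x - μ k‖ ^ 2 / 2) := by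
          apply Real.exp_le_exp.mpr
          have h2 : ‖x - μ k‖^2 ≤ (u+a)^2 := by nlinarith [norm_nonneg (x - μ k)]
          linarith
        calc κ * Real.exp (-(u+a)^2/2) ≤ pr k * Real.exp (-‖x - μ k‖ ^ 2 / 2) :=
            mul_le_mul (hκmin k) h1 (Real.exp_pos _).le (hpr k).le
          _ ≤ ∑ l, pr l * Real.exp (-‖x - μ l‖ ^ 2 / 2) := Finset.single_le_sum
              (f := fun l => pr l * Real.exp (-‖x - μ l‖ ^ 2 / 2))
              (fun l _ => mul_nonneg (hpr l).le (Real.exp_pos _).le) (Finset.mem_univ k)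
      unfold respW
      rw [div_le_iff₀ (hS_pos x)]
      have hnum_le : pr m * Real.exp (-‖x - μ m‖ ^ 2 / 2)
          ≤ Real.exp (-(Rmin - a - u)^2/2) := by
        have h2 : (Rmin - a - u)^2 ≤ ‖x - μ m‖^2 := by nlinarith
        calc pr m * Real.exp (-‖x - μ m‖ ^ 2 / 2) ≤ 1 * Real.exp (-‖x - μ m‖ ^ 2 / 2) :=
            mul_le_mul_of_nonneg_right (hpr1 m) (Real.exp_pos _).le
          _ = Real.exp (-‖x - μ m‖ ^ 2 / 2) := one_mul _
          _ ≤ Real.exp (-(Rmin - a - u)^2/2) := Real.exp_le_exp.mpr (by linarith)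
      have hmid : Real.exp (-(Rmin - a - u)^2/2)
          ≤ K1 * (κ * Real.exp (-(u + a)^2 / 2)) := by
        have heq : K1 * (κ * Real.exp (-(u + a)^2 / 2))
            = Real.exp (-D * s / 8 + -(u+a)^2/2) := by
          rw [hK1_def, Real.exp_add]
          field_simp
        rw [heq]
        apply Real.exp_le_exp.mpr
        have h6 : s/8 ≤ D - u := by rw [hT_def] at hcase; linarith
        have h9 : D * s / 8 ≤ Rmin * (D - u) := by
          nlinarith [mul_nonneg hD0 (sub_nonneg.mpr h6),
            mul_nonneg (sub_nonneg.mpr hDR) (by linarith : (0:ℝ) ≤ D - u)]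
        have e2 : (Rmin - a - u)^2/2 - (u+a)^2/2 = Rmin * (D - u) := by
          rw [hD_def]; ring
        linarith
      calc pr m * Real.exp (-‖x - μ m‖ ^ 2 / 2)
          ≤ Real.exp (-(Rmin - a - u)^2/2) := hnum_le
        _ ≤ K1 * (κ * Real.exp (-(u + a)^2 / 2)) := hmid
        _ ≤ K1 * ∑ l, pr l * Real.exp (-‖x - μ l‖ ^ 2 / 2) :=
            mul_le_mul_of_nonneg_left hSk hK1_0
    have hW : respW d M pr μ i x * respW d M pr μ j x * ‖x - μ i‖ * ‖x - μ j‖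
        ≤ K1 * (u + c)^2 := by
      have h1 : respW d M pr μ i x * respW d M pr μ j x ≤ K1 := le_trans hwm hkey
      have h0 : 0 ≤ respW d M pr μ i x * respW d M pr μ j x :=
        mul_nonneg (hw0 i x) (hw0 j x)
      calc respW d M pr μ i x * respW d M pr μ j x * ‖x - μ i‖ * ‖x - μ j‖
          = (respW d M pr μ i x * respW d M pr μ j x) * (‖x - μ i‖ * ‖x - μ j‖) := by ring
        _ ≤ K1 * (u + c)^2 :=
            mul_le_mul h1 hprod_n (mul_nonneg (norm_nonneg _) (norm_nonneg _)) hK1_0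
    have hfin : respW d M pr μ i x * respW d M pr μ j x * ‖x - μ i‖ * ‖x - μ j‖ *
        Real.exp (-u ^ 2 / 2) ≤ K1 * ((u + c)^2 * Real.exp (-u ^ 2 / 2)) := by
      calc respW d M pr μ i x * respW d M pr μ j x * ‖x - μ i‖ * ‖x - μ j‖ *
          Real.exp (-u ^ 2 / 2) ≤ (K1 * (u + c)^2) * Real.exp (-u ^ 2 / 2) :=
          mul_le_mul_of_nonneg_right hW (Real.exp_pos _).le
        _ = K1 * ((u + c)^2 * Real.exp (-u ^ 2 / 2)) := by ring
    have h2nd : 0 ≤ K2 * Real.exp (-u ^ 2 / 4) := mul_nonneg hK2_0 (Real.exp_pos _).le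
    linarith
  · -- far case
    have hWle : respW d M pr μ i x * respW d M pr μ j x * ‖x - μ i‖ * ‖x - μ j‖
        ≤ (u + c)^2 := by
      have h1 : respW d M pr μ i x * respW d M pr μ j x ≤ 1 :=
        mul_le_one₀ (hw1 i x) (hw0 j x) (hw1 j x)
      calc respW d M pr μ i x * respW d M pr μ j x * ‖x - μ i‖ * ‖x - μ j‖
          = (respW d M pr μ i x * respW d M pr μ j x) * (‖x - μ i‖ * ‖x - μ j‖) := by ring
        _ ≤ 1 * (u + c)^2 := mul_le_mul h1 hprod_n
            (mul_nonneg (norm_nonneg _) (norm_nonneg _)) (by norm_num)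
        _ = (u + c)^2 := one_mul _
    have hexp1 : (1:ℝ) ≤ Real.exp (u^2/8) := by
      nlinarith [Real.add_one_le_exp (u^2/8), sq_nonneg u]
    have hpoly : (u + c)^2 ≤ 3 * c^2 * Real.exp (u^2/8) := by
      have h8 : u^2 ≤ 8 * Real.exp (u^2/8) := by
        nlinarith [Real.add_one_le_exp (u^2/8)]
      nlinarith [sq_nonneg (u - c),
        mul_nonneg (by nlinarith : (0:ℝ) ≤ c^2 - 16) (by linarith : (0:ℝ) ≤ Real.exp (u^2/8) - 1),
        mul_nonneg (sq_nonneg c) (by linarith : (0:ℝ) ≤ Real.exp (u^2/8) - 1)]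
    have hfin : (u + c)^2 * Real.exp (-u ^ 2 / 2) ≤ K2 * Real.exp (-u ^ 2 / 4) := by
      have h1 : (u + c)^2 * Real.exp (-u ^ 2 / 2)
          ≤ (3 * c^2 * Real.exp (u^2/8)) * Real.exp (-u ^ 2 / 2) :=
        mul_le_mul_of_nonneg_right hpoly (Real.exp_pos _).le
      have h2 : (3 * c^2 * Real.exp (u^2/8)) * Real.exp (-u ^ 2 / 2)
          = 3 * c^2 * Real.exp (u^2/8 + -u^2/2) := by
        rw [Real.exp_add]; ring
      have h3 : Real.exp (u^2/8 + -u^2/2) ≤ Real.exp (-T^2/8 + -u^2/4) := by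
        apply Real.exp_le_exp.mpr
        nlinarith [mul_nonneg hT0 hT0]
      have h4 : K2 * Real.exp (-u ^ 2 / 4) = 3 * c^2 * Real.exp (-T^2/8 + -u^2/4) := by
        rw [hK2_def, Real.exp_add]; ring
      rw [h4]
      calc (u + c)^2 * Real.exp (-u ^ 2 / 2) ≤ 3 * c^2 * Real.exp (u^2/8 + -u^2/2) := by
              rw [← h2]; exact h1
            _ ≤ 3 * c^2 * Real.exp (-T^2/8 + -u^2/4) := by
              apply mul_le_mul_of_nonneg_left h3 (by positivity)
    have hfin2 : respW d M pr μ i x * respW d M pr μ j x * ‖x - μ i‖ * ‖x - μ j‖ *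
        Real.exp (-u ^ 2 / 2) ≤ K2 * Real.exp (-u ^ 2 / 4) := by
      calc respW d M pr μ i x * respW d M pr μ j x * ‖x - μ i‖ * ‖x - μ j‖ *
          Real.exp (-u ^ 2 / 2) ≤ (u + c)^2 * Real.exp (-u ^ 2 / 2) :=
          mul_le_mul_of_nonneg_right hWle (Real.exp_pos _).le
        _ ≤ K2 * Real.exp (-u ^ 2 / 4) := hfin
    have h1st : 0 ≤ K1 * ((u + c)^2 * Real.exp (-u ^ 2 / 2)) := by
      apply mul_nonneg hK1_0
      positivity
    linarith

set_option maxHeartbeats 1000000 in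
/-- Second inequality of Lemma A.1: for `i ≠ j`,
`E[w_i w_j ‖X−μ_i‖‖X−μ_j‖] ≤ ((2−κ)/κ)((3/2)R_max + d)² exp(−(R_min/2 − a)√d/8)`. -/
theorem stmt_14 (d M : ℕ) (hM : 0 < M) (pr : Fin M → ℝ)
    (hpr : ∀ i, 0 < pr i) (hsum : ∑ i, pr i = 1)
    (κ : ℝ) (hκ : 0 < κ) (hκmin : ∀ i, κ ≤ pr i)
    (μstar : Fin M → EuclideanSpace ℝ (Fin d))
    (Rmin Rmax : ℝ)
    (hRmin : ∀ i j, i ≠ j → Rmin ≤ ‖μstar i - μstar j‖)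
    (hRmax : ∀ i j, i ≠ j → ‖μstar i - μstar j‖ ≤ Rmax)
    (hsep : 30 * Real.sqrt d ≤ Rmin)
    (a : ℝ)
    (ha : a ≤ Rmin / 2 - Real.sqrt d *
        max (4 * Real.sqrt (2 * max (Real.log (Rmin / 4)) 0)) (8 * Real.sqrt 3)) :
    ∀ μ : Fin M → EuclideanSpace ℝ (Fin d), (∀ i, ‖μ i - μstar i‖ ≤ a) →
      ∀ i j, i ≠ j →
        ∫ x, respW d M pr μ i x * respW d M pr μ j x * ‖x - μ i‖ * ‖x - μ j‖ *
            mixDensity d M pr μstar x ≤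
          (2 - κ) / κ * ((3 / 2) * Rmax + d) ^ 2 *
            Real.exp (-(Rmin / 2 - a) * Real.sqrt d / 8) := by
  intro μ hμ i j hij
  have hNE : Nonempty (Fin M) := ⟨i⟩
  have hpr1 : ∀ k, pr k ≤ 1 := fun k => by
    rw [← hsum]
    exact Finset.single_le_sum (fun l _ => (hpr l).le) (Finset.mem_univ k)
  have hκ1 : κ ≤ 1/2 := by
    have hij_sum : pr i + pr j ≤ 1 := by
      rw [← hsum]
      have h := Finset.sum_le_sum_of_subset_of_nonneg
        (Finset.subset_univ ({i, j} : Finset (Fin M))) (fun k _ _ => (hpr k).le)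
      rwa [Finset.sum_pair hij] at h
    have h1 := hκmin i
    have h2 := hκmin j
    linarith
  have h2κ : (0:ℝ) ≤ (2 - κ)/κ := div_nonneg (by linarith) hκ.le
  rcases Nat.eq_zero_or_pos d with hd0 | hdpos
  · subst hd0
    have hz : ∀ v : EuclideanSpace ℝ (Fin 0), ‖v‖ = 0 := fun v => by
      simp [EuclideanSpace.norm_eq]
    have hzero : (fun x : EuclideanSpace ℝ (Fin 0) =>
        respW 0 M pr μ i x * respW 0 M pr μ j x * ‖x - μ i‖ * ‖x - μ j‖ *
          mixDensity 0 M pr μstar x) = fun _ => (0:ℝ) :=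
      funext fun x => by rw [hz (x - μ i)]; ring
    rw [hzero, integral_zero]
    positivity
  have hdR : (1:ℝ) ≤ (d:ℝ) := by exact_mod_cast hdpos
  set s : ℝ := Real.sqrt d with hs_def
  have hs0 : 0 ≤ s := Real.sqrt_nonneg _
  have hs1 : 1 ≤ s := by
    rw [hs_def, show (1:ℝ) = Real.sqrt 1 by simp]
    exact Real.sqrt_le_sqrt hdR
  have hs2 : s^2 = d := Real.sq_sqrt (by positivity)
  have hRmM : Rmin ≤ Rmax := le_trans (hRmin i j hij) (hRmax i j hij)
  have hRmin30 : 30 ≤ Rmin := le_trans (by nlinarith) hsep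
  have ha0 : 0 ≤ a := le_trans (norm_nonneg _) (hμ i)
  have h83 : (13:ℝ) ≤ 8 * Real.sqrt 3 := by
    have h3 : Real.sqrt 3 ^ 2 = 3 := Real.sq_sqrt (by norm_num)
    nlinarith [Real.sqrt_nonneg 3]
  have hmax13 : (13:ℝ) ≤ max (4 * Real.sqrt (2 * max (Real.log (Rmin / 4)) 0)) (8 * Real.sqrt 3) :=
    le_trans h83 (le_max_right _ _)
  set D : ℝ := Rmin / 2 - a with hD_def
  have hD13 : 13 * s ≤ D := by
    have h1 : 13 * s ≤ s * max (4 * Real.sqrt (2 * max (Real.log (Rmin / 4)) 0)) (8 * Real.sqrt 3) := by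
      calc (13:ℝ) * s = s * 13 := by ring
        _ ≤ _ := mul_le_mul_of_nonneg_left hmax13 hs0
    rw [hD_def]; linarith
  have hD0 : 0 ≤ D := by nlinarith
  have hDR : D ≤ Rmin := by rw [hD_def]; linarith
  set T : ℝ := D - s/8 with hT_def
  have hT0 : 0 ≤ T := by rw [hT_def]; nlinarith
  set c : ℝ := 3 / 2 * Rmax with hc_def
  have hc45 : (45:ℝ) ≤ c := by rw [hc_def]; nlinarith
  have hc0 : (0:ℝ) ≤ c := by linarith
  -- numeric inequality
  have hnum : 3 * (2:ℝ) ^ ((d:ℝ)/2) * Real.exp (-T^2/8) ≤ Real.exp (-D * s / 8) := by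
    have hl2 : Real.log 2 ≤ 0.7 := by linarith [Real.log_two_lt_d9]
    have hl3 : Real.log 3 ≤ 1.4 := by
      have h34 : Real.log 3 ≤ Real.log 4 := by
        apply Real.log_le_log (by norm_num) (by norm_num)
      have h4 : Real.log 4 = 2 * Real.log 2 := by
        rw [show (4:ℝ) = 2^2 by norm_num, Real.log_pow]
        push_cast; ring
      linarith
    have h2r : (2:ℝ) ^ ((d:ℝ)/2) = Real.exp (Real.log 2 * ((d:ℝ)/2)) :=
      Real.rpow_def_of_pos (by norm_num) _
    rw [h2r, show (3:ℝ) = Real.exp (Real.log 3) from (Real.exp_log (by norm_num)).symm,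
      ← Real.exp_add, ← Real.exp_add]
    apply Real.exp_le_exp.mpr
    have hds : (d:ℝ) = s^2 := hs2.symm
    rw [hds, hT_def]
    exact numineq s D _ _ hs1 hD13 (by linarith [Real.log_two_lt_d9]) hl3
  -- notation
  have hC0 : (0:ℝ) < (2 * π) ^ (-(d:ℝ)/2) := by positivity
  set K1 : ℝ := 1/κ * Real.exp (-D * s / 8) with hK1_def
  set K2 : ℝ := 3 * c^2 * Real.exp (-T^2/8) with hK2_def
  have hK1_0 : 0 ≤ K1 := mul_nonneg (by positivity) (Real.exp_pos _).le
  have hK2_0 : 0 ≤ K2 := by positivity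
  set g : EuclideanSpace ℝ (Fin d) → ℝ := fun z =>
    (2 * π) ^ (-(d:ℝ)/2) * (K1 * ((‖z‖ + c) ^ 2 * Real.exp (-‖z‖ ^ 2 / 2))
      + K2 * Real.exp (-‖z‖ ^ 2 / 4)) with hg_def
  have hg_int : Integrable g := by
    exact (((Iuc d c).const_mul K1).add ((I4 d).const_mul K2)).const_mul _
  -- bound on the integral of g
  have hGg : ∫ z, g z ≤ K1 * (c + d)^2 + K2 * (2:ℝ)^((d:ℝ)/2) := by
    have hint : ∫ z, g z = (2*π) ^ (-(d:ℝ)/2) *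
        (K1 * (∫ z : EuclideanSpace ℝ (Fin d), (‖z‖ + c) ^ 2 * Real.exp (-‖z‖ ^ 2 / 2))
          + K2 * ∫ z : EuclideanSpace ℝ (Fin d), Real.exp (-‖z‖ ^ 2 / 4)) := by
      rw [hg_def, integral_const_mul,
        integral_add ((Iuc d c).const_mul K1) ((I4 d).const_mul K2),
        integral_const_mul, integral_const_mul]
    have hCP : (2*π) ^ (-(d:ℝ)/2) * (2*π) ^ ((d:ℝ)/2) = 1 := by
      rw [← Real.rpow_add (by positivity), show -(d:ℝ)/2 + (d:ℝ)/2 = 0 by ring,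
        Real.rpow_zero]
    rw [hint, G4 d]
    have hGuc := Guc d c hc0 hdpos
    calc (2*π) ^ (-(d:ℝ)/2) *
        (K1 * (∫ z : EuclideanSpace ℝ (Fin d), (‖z‖ + c) ^ 2 * Real.exp (-‖z‖ ^ 2 / 2))
          + K2 * ((2:ℝ)^((d:ℝ)/2) * (2*π) ^ ((d:ℝ)/2)))
        ≤ (2*π) ^ (-(d:ℝ)/2) * (K1 * ((c + d)^2 * (2*π) ^ ((d:ℝ)/2))
          + K2 * ((2:ℝ)^((d:ℝ)/2) * (2*π) ^ ((d:ℝ)/2))) := by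
          apply mul_le_mul_of_nonneg_left _ hC0.le
          exact add_le_add_left (mul_le_mul_of_nonneg_left hGuc hK1_0) _
      _ = (K1 * (c + d)^2 + K2 * (2:ℝ)^((d:ℝ)/2)) * ((2*π) ^ (-(d:ℝ)/2) * (2*π) ^ ((d:ℝ)/2)) := by
              ring
      _ = K1 * (c + d)^2 + K2 * (2:ℝ)^((d:ℝ)/2) := by rw [hCP, mul_one]
  -- final constant comparison
  have hfc : K1 * (c + d)^2 + K2 * (2:ℝ)^((d:ℝ)/2)
      ≤ (2 - κ)/κ * (c + d)^2 * Real.exp (-D * s / 8) := by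
    have h2d : (0:ℝ) ≤ (2:ℝ)^((d:ℝ)/2) := by positivity
    have hsecond : K2 * (2:ℝ)^((d:ℝ)/2) ≤ (c + d)^2 * Real.exp (-D * s / 8) := by
      have h1 : K2 * (2:ℝ)^((d:ℝ)/2) = c^2 * (3 * (2:ℝ)^((d:ℝ)/2) * Real.exp (-T^2/8)) := by
        rw [hK2_def]; ring
      rw [h1]
      calc c^2 * (3 * (2:ℝ)^((d:ℝ)/2) * Real.exp (-T^2/8))
          ≤ c^2 * Real.exp (-D * s / 8) := mul_le_mul_of_nonneg_left hnum (sq_nonneg c)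
        _ ≤ (c + d)^2 * Real.exp (-D * s / 8) := by
                apply mul_le_mul_of_nonneg_right _ (Real.exp_pos _).le
                nlinarith
    have hfirst : K1 * (c + d)^2 = 1/κ * ((c+d)^2 * Real.exp (-D * s / 8)) := by
      rw [hK1_def]; ring
    have hbudget : 1/κ + 1 ≤ (2 - κ)/κ := by
      rw [show 1/κ + 1 = (1 + κ)/κ by field_simp, div_le_div_iff₀ hκ hκ]
      nlinarith
    have hq : (0:ℝ) ≤ (c+d)^2 * Real.exp (-D * s / 8) := by positivity
    calc K1 * (c + d)^2 + K2 * (2:ℝ)^((d:ℝ)/2)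
        ≤ 1/κ * ((c+d)^2 * Real.exp (-D * s / 8)) + (c + d)^2 * Real.exp (-D * s / 8) := by
          rw [hfirst]; linarith
      _ = (1/κ + 1) * ((c+d)^2 * Real.exp (-D * s / 8)) := by ring
      _ ≤ (2 - κ)/κ * ((c+d)^2 * Real.exp (-D * s / 8)) := mul_le_mul_of_nonneg_right hbudget hq
      _ = (2 - κ)/κ * (c + d)^2 * Real.exp (-D * s / 8) := by ring
  -- pointwise facts about responsibilities
  have hS_pos : ∀ x : EuclideanSpace ℝ (Fin d),
      0 < ∑ k, pr k * Real.exp (-‖x - μ k‖ ^ 2 / 2) := S_pos hpr hNE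
  have hw0 : ∀ l x, 0 ≤ respW d M pr μ l x := respW_nonneg hpr hNE
  have hw1 : ∀ l x, respW d M pr μ l x ≤ 1 := respW_le_one hpr hNE
  -- per-component pointwise bound
  have hk : ∀ (k : Fin M) (x : EuclideanSpace ℝ (Fin d)),
      respW d M pr μ i x * respW d M pr μ j x * ‖x - μ i‖ * ‖x - μ j‖ *
          Real.exp (-‖x - μstar k‖ ^ 2 / 2)
        ≤ K1 * ((‖x - μstar k‖ + c) ^ 2 * Real.exp (-‖x - μstar k‖ ^ 2 / 2))
          + K2 * Real.exp (-‖x - μstar k‖ ^ 2 / 4) := fun k x =>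
    perk pr hpr hsum κ hκ hκmin μ μstar a Rmin Rmax D T s c K1 K2 hμ hRmin hRmax
      hD_def hT_def hc_def hK1_def hK2_def ha0 hs0 hs1 hRmin30 hRmM hD0 hDR hT0 hc45
      hK1_0 hK2_0 i j k hij x
  -- continuity / measurability
  have hcnorm : ∀ ν : EuclideanSpace ℝ (Fin d), Continuous fun x : EuclideanSpace ℝ (Fin d) =>
      ‖x - ν‖ := fun ν => (continuous_id.sub continuous_const).norm
  have hcexp : ∀ ν : EuclideanSpace ℝ (Fin d), Continuous fun x : EuclideanSpace ℝ (Fin d) =>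
      Real.exp (-‖x - ν‖ ^ 2 / 2) := fun ν =>
    Real.continuous_exp.comp ((((hcnorm ν).pow 2).neg).div_const 2)
  have hcS : Continuous fun x : EuclideanSpace ℝ (Fin d) =>
      ∑ k, pr k * Real.exp (-‖x - μ k‖ ^ 2 / 2) :=
    continuous_finset_sum _ fun k _ => continuous_const.mul (hcexp (μ k))
  have hcresp : ∀ l, Continuous (respW d M pr μ l) := by
    intro l
    unfold respW
    exact (continuous_const.mul (hcexp (μ l))).div hcS fun x => (hS_pos x).ne'
  have hcmix : Continuous (mixDensity d M pr μstar) := by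
    unfold mixDensity stdGaussDensity
    exact continuous_finset_sum _ fun k _ =>
      continuous_const.mul (continuous_const.mul (hcexp (μstar k)))
  have hf_cont : Continuous fun x : EuclideanSpace ℝ (Fin d) =>
      respW d M pr μ i x * respW d M pr μ j x * ‖x - μ i‖ * ‖x - μ j‖ *
        mixDensity d M pr μstar x :=
    ((((hcresp i).mul (hcresp j)).mul (hcnorm (μ i))).mul (hcnorm (μ j))).mul hcmix
  -- the dominating function
  have hG_int : Integrable (fun x : EuclideanSpace ℝ (Fin d) =>
      ∑ k, pr k * g (x - μstar k)) :=
    integrable_finset_sum _ fun k _ => (hg_int.comp_sub_right (μstar k)).const_mul (pr k)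
  have hg0 : ∀ z, 0 ≤ g z := by
    intro z
    rw [hg_def]
    apply mul_nonneg hC0.le
    apply add_nonneg
    · exact mul_nonneg hK1_0 (by positivity)
    · exact mul_nonneg hK2_0 (Real.exp_pos _).le
  have hf0 : ∀ x : EuclideanSpace ℝ (Fin d),
      0 ≤ respW d M pr μ i x * respW d M pr μ j x * ‖x - μ i‖ * ‖x - μ j‖ *
        mixDensity d M pr μstar x := by
    intro x
    have hmix0 : 0 ≤ mixDensity d M pr μstar x := by
      unfold mixDensity stdGaussDensity
      exact Finset.sum_nonneg fun k _ => mul_nonneg (hpr k).le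
        (mul_nonneg hC0.le (Real.exp_pos _).le)
    exact mul_nonneg (mul_nonneg (mul_nonneg (mul_nonneg (hw0 i x) (hw0 j x))
      (norm_nonneg _)) (norm_nonneg _)) hmix0
  -- pointwise domination
  have hpoint : ∀ x : EuclideanSpace ℝ (Fin d),
      respW d M pr μ i x * respW d M pr μ j x * ‖x - μ i‖ * ‖x - μ j‖ *
        mixDensity d M pr μstar x ≤ ∑ k, pr k * g (x - μstar k) := by
    intro x
    have hmixeq : mixDensity d M pr μstar x
        = ∑ k, pr k * ((2 * π) ^ (-(d:ℝ)/2) * Real.exp (-‖x - μstar k‖ ^ 2 / 2)) := rfl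
    rw [hmixeq, Finset.mul_sum]
    apply Finset.sum_le_sum
    intro k _
    have hgk : g (x - μstar k) = (2 * π) ^ (-(d:ℝ)/2) *
        (K1 * ((‖x - μstar k‖ + c) ^ 2 * Real.exp (-‖x - μstar k‖ ^ 2 / 2))
          + K2 * Real.exp (-‖x - μstar k‖ ^ 2 / 4)) := by rw [hg_def]
    calc respW d M pr μ i x * respW d M pr μ j x * ‖x - μ i‖ * ‖x - μ j‖ *
        (pr k * ((2 * π) ^ (-(d:ℝ)/2) * Real.exp (-‖x - μstar k‖ ^ 2 / 2)))
        = (pr k * (2 * π) ^ (-(d:ℝ)/2)) *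
          (respW d M pr μ i x * respW d M pr μ j x * ‖x - μ i‖ * ‖x - μ j‖ *
            Real.exp (-‖x - μstar k‖ ^ 2 / 2)) := by ring
      _ ≤ (pr k * (2 * π) ^ (-(d:ℝ)/2)) *
          (K1 * ((‖x - μstar k‖ + c) ^ 2 * Real.exp (-‖x - μstar k‖ ^ 2 / 2))
            + K2 * Real.exp (-‖x - μstar k‖ ^ 2 / 4)) :=
          mul_le_mul_of_nonneg_left (hk k x) (mul_nonneg (hpr k).le hC0.le)
      _ = pr k * g (x - μstar k) := by rw [hgk]; ring
  -- integrability of the integrand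
  have hf_int : Integrable (fun x : EuclideanSpace ℝ (Fin d) =>
      respW d M pr μ i x * respW d M pr μ j x * ‖x - μ i‖ * ‖x - μ j‖ *
        mixDensity d M pr μstar x) := by
    apply hG_int.mono' hf_cont.aestronglyMeasurable
    refine Filter.Eventually.of_forall fun x => ?_
    rw [Real.norm_eq_abs, abs_of_nonneg (hf0 x)]
    exact hpoint x
  -- final chain
  calc ∫ x, respW d M pr μ i x * respW d M pr μ j x * ‖x - μ i‖ * ‖x - μ j‖ *
        mixDensity d M pr μstar x
      ≤ ∫ x, ∑ k, pr k * g (x - μstar k) := integral_mono hf_int hG_int hpoint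
    _ = ∑ k, pr k * ∫ z, g z := by
            rw [integral_finset_sum _ fun k _ => (hg_int.comp_sub_right (μstar k)).const_mul (pr k)]
            congr 1 with k
            rw [integral_const_mul, integral_sub_right_eq_self g (μstar k)]
    _ = ∫ z, g z := by rw [← Finset.sum_mul, hsum, one_mul]
    _ ≤ K1 * (c + d)^2 + K2 * (2:ℝ)^((d:ℝ)/2) := hGg
    _ ≤ (2 - κ)/κ * (c + d)^2 * Real.exp (-D * s / 8) := hfc
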